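/- Let σ > 0 and n ≥ 1 with σ/(2√n) ≤ 1/4. Then for every estimator μ̂ : ℝⁿ → ℝ (a measurable function of n i.i.d. samples), sup over θ ∈ [0,1] of E_{X_1,...,X_n ~ N(θ,σ²) i.i.d.} |μ̂(X_1,...,X_n) − θ| ≥ σ/(8√n). -/

import Mathlib

open MeasureTheory ProbabilityTheory

open scoped ENNReal NNReal

section Aux

/-- Lintegral of a product of coordinate functions over a finite product of copies of
Lebesgue measure factorizes. -/
lemma lintegral_pi_prod_aux : ∀ (n : ℕ) (f : Fin n → ℝ → ℝ≥0∞), (∀ i, Measurable (f i)) →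
    ∫⁻ v : Fin n → ℝ, ∏ i, f i (v i) ∂(Measure.pi fun _ => (volume : Measure ℝ))
      = ∏ i, ∫⁻ x, f i x := by
  intro n
  induction n with
  | zero =>
      intro f hf
      simp [lintegral_const, Measure.pi_univ]
  | succ n ih =>
      intro f hf
      have hMP := measurePreserving_piFinSuccAbove
        (fun _ : Fin (n + 1) => (volume : Measure ℝ)) 0
      set g : ℝ × (Fin n → ℝ) → ℝ≥0∞ :=
        fun p => f 0 p.1 * ∏ j, f (Fin.succ j) (p.2 j) with hg
      have hgm : Measurable g := by
        apply Measurable.mul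
        · exact (hf 0).comp measurable_fst
        · exact Finset.measurable_prod _ fun j _ =>
            (hf _).comp ((measurable_pi_apply j).comp measurable_snd)
      have hcomp : ∀ v : Fin (n + 1) → ℝ,
          g (MeasurableEquiv.piFinSuccAbove (fun _ => ℝ) 0 v) = ∏ i, f i (v i) := by
        intro v
        rw [Fin.prod_univ_succ]
        simp [hg, MeasurableEquiv.piFinSuccAbove, Fin.insertNthEquiv, Fin.succAbove_zero,
          Fin.tail]
      calc ∫⁻ v : Fin (n + 1) → ℝ, ∏ i, f i (v i) ∂(Measure.pi fun _ => (volume : Measure ℝ))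
          = ∫⁻ v, g (MeasurableEquiv.piFinSuccAbove (fun _ => ℝ) 0 v)
              ∂(Measure.pi fun _ => (volume : Measure ℝ)) := by
            simp_rw [hcomp]
        _ = ∫⁻ p, g p ∂((volume : Measure ℝ).prod (Measure.pi fun _ : Fin n => volume)) :=
            hMP.lintegral_comp hgm
        _ = (∫⁻ x, f 0 x) * ∫⁻ y : Fin n → ℝ, ∏ j, f (Fin.succ j) (y j)
              ∂(Measure.pi fun _ => (volume : Measure ℝ)) := by
            exact lintegral_prod_mul (hf 0).aemeasurable
              (Finset.measurable_prod _ fun j _ =>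
                (hf _).comp (measurable_pi_apply j)).aemeasurable
        _ = (∫⁻ x, f 0 x) * ∏ j : Fin n, ∫⁻ x, f (Fin.succ j) x := by
            rw [ih _ fun j => hf _]
        _ = ∏ i, ∫⁻ x, f i x := (Fin.prod_univ_succ fun i => ∫⁻ x, f i x).symm

/-- A finite product of `withDensity` measures is `withDensity` of the product density. -/
lemma pi_withDensity_aux (n : ℕ) (f : Fin n → ℝ → ℝ≥0∞) (hf : ∀ i, Measurable (f i))
    (hsf : ∀ i, SigmaFinite ((volume : Measure ℝ).withDensity (f i))) :
    Measure.pi (fun i => (volume : Measure ℝ).withDensity (f i))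
      = (Measure.pi fun _ : Fin n => (volume : Measure ℝ)).withDensity
          (fun v => ∏ i, f i (v i)) := by
  haveI : ∀ i, SigmaFinite ((volume : Measure ℝ).withDensity (f i)) := hsf
  refine Measure.pi_eq fun s hs => ?_
  rw [withDensity_apply _ (MeasurableSet.univ_pi hs)]
  have hind : ∫⁻ v in Set.pi Set.univ s, ∏ i, f i (v i)
        ∂(Measure.pi fun _ => (volume : Measure ℝ))
      = ∫⁻ v : Fin n → ℝ, ∏ i, (s i).indicator (f i) (v i)
        ∂(Measure.pi fun _ => (volume : Measure ℝ)) := by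
    rw [← lintegral_indicator (MeasurableSet.univ_pi hs) _]
    congr 1
    funext v
    by_cases hv : v ∈ Set.pi Set.univ s
    · rw [Set.indicator_of_mem hv]
      exact Finset.prod_congr rfl fun i _ =>
        (Set.indicator_of_mem (hv i trivial) _).symm
    · rw [Set.indicator_of_notMem hv]
      rw [Set.mem_univ_pi] at hv
      push_neg at hv
      obtain ⟨i, hi⟩ := hv
      exact (Finset.prod_eq_zero (Finset.mem_univ i)
        (Set.indicator_of_notMem hi _)).symm
  rw [hind, lintegral_pi_prod_aux n _ fun i => (hf i).indicator (hs i)]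
  exact Finset.prod_congr rfl fun i _ => by
    rw [lintegral_indicator (hs i), withDensity_apply _ (hs i)]

/-- Pointwise: the geometric mean of two gaussian densities is a multiple of the gaussian
density at the midpoint. -/
lemma gauss_sqrt_aux (θ₀ θ₁ : ℝ) (v : ℝ≥0) (hv : v ≠ 0) (x : ℝ) :
    Real.sqrt (gaussianPDFReal θ₀ v x * gaussianPDFReal θ₁ v x)
      = Real.exp (-((θ₁ - θ₀) ^ 2 / (8 * (v : ℝ))))
        * gaussianPDFReal ((θ₀ + θ₁) / 2) v x := by
  have hvpos : 0 < (v : ℝ) := by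
    have : 0 < v := pos_iff_ne_zero.mpr hv
    exact_mod_cast this
  have hvne : (v : ℝ) ≠ 0 := ne_of_gt hvpos
  have h2pi : (0:ℝ) < 2 * Real.pi * v := by positivity
  have hsqrtexp : ∀ t : ℝ, Real.sqrt (Real.exp t) = Real.exp (t / 2) := by
    intro t
    rw [show Real.exp t = Real.exp (t / 2) ^ 2 from by rw [sq, ← Real.exp_add]; ring_nf,
      Real.sqrt_sq (Real.exp_pos _).le]
  have lhsEq : gaussianPDFReal θ₀ v x * gaussianPDFReal θ₁ v x
      = (2 * Real.pi * (v:ℝ))⁻¹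
        * Real.exp (-(x - θ₀) ^ 2 / (2 * (v:ℝ)) + -(x - θ₁) ^ 2 / (2 * (v:ℝ))) := by
    simp only [gaussianPDFReal]
    rw [Real.exp_add,
      show (2 * Real.pi * (v:ℝ))⁻¹
          = (Real.sqrt (2 * Real.pi * v))⁻¹ * (Real.sqrt (2 * Real.pi * v))⁻¹ from by
        rw [← mul_inv, Real.mul_self_sqrt h2pi.le]]
    ring
  rw [lhsEq, Real.sqrt_mul (by positivity : (0:ℝ) ≤ (2 * Real.pi * (v:ℝ))⁻¹),
    Real.sqrt_inv, hsqrtexp]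
  have hexp : (-(x - θ₀) ^ 2 / (2 * (v:ℝ)) + -(x - θ₁) ^ 2 / (2 * (v:ℝ))) / 2
      = -((θ₁ - θ₀) ^ 2 / (8 * (v:ℝ))) + -(x - (θ₀ + θ₁) / 2) ^ 2 / (2 * (v:ℝ)) := by
    field_simp
    ring
  rw [hexp, Real.exp_add]
  simp only [gaussianPDFReal]
  ring

end Aux

section Key

variable {n : ℕ}

/-- The key two-point testing bound: for the two product Gaussian measures at
`1/2 - δ` and `1/2 + δ` with `δ = σ/(2√n)`, no event can separate them too well. -/
lemma two_point_aux (σ : ℝ) (hσ : 0 < σ) (n : ℕ) (hn : 1 ≤ n) (δ : ℝ)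
    (hδ : δ = σ / (2 * Real.sqrt n))
    (A : Set (Fin n → ℝ)) (hA : MeasurableSet A) :
    ENNReal.ofReal (1 / 2) ≤
      (Measure.pi fun _ : Fin n => gaussianReal (1 / 2 - δ) (Real.toNNReal (σ ^ 2))) A
        + (Measure.pi fun _ : Fin n => gaussianReal (1 / 2 + δ) (Real.toNNReal (σ ^ 2))) Aᶜ := by
  set V : ℝ≥0 := Real.toNNReal (σ ^ 2) with hVdef
  have hV : V ≠ 0 := by
    simp only [hVdef, ne_eq, Real.toNNReal_eq_zero, not_le]
    positivity
  have hVc : (V : ℝ) = σ ^ 2 := Real.coe_toNNReal _ (sq_nonneg σ)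
  set θ₀ : ℝ := 1 / 2 - δ
  set θ₁ : ℝ := 1 / 2 + δ
  set g₀ : ℝ → ℝ≥0∞ := gaussianPDF θ₀ V
  set g₁ : ℝ → ℝ≥0∞ := gaussianPDF θ₁ V
  set volπ : Measure (Fin n → ℝ) := Measure.pi fun _ => volume with hvolπ
  set p₀ : (Fin n → ℝ) → ℝ≥0∞ := fun v => ∏ i, g₀ (v i) with hp₀
  set p₁ : (Fin n → ℝ) → ℝ≥0∞ := fun v => ∏ i, g₁ (v i) with hp₁
  have hm₀ : Measurable p₀ :=
    Finset.measurable_prod _ fun i _ => (measurable_gaussianPDF _ _).comp (measurable_pi_apply i)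
  have hm₁ : Measurable p₁ :=
    Finset.measurable_prod _ fun i _ => (measurable_gaussianPDF _ _).comp (measurable_pi_apply i)
  have hsf : ∀ θ : ℝ, SigmaFinite ((volume : Measure ℝ).withDensity (gaussianPDF θ V)) := by
    intro θ
    rw [← gaussianReal_of_var_ne_zero θ hV]
    infer_instance
  have hμ₀ : (Measure.pi fun _ : Fin n => gaussianReal θ₀ V) = volπ.withDensity p₀ := by
    have : (fun _ : Fin n => gaussianReal θ₀ V)
        = fun _ : Fin n => (volume : Measure ℝ).withDensity (gaussianPDF θ₀ V) := by
      funext _; exact gaussianReal_of_var_ne_zero _ hV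
    rw [this, pi_withDensity_aux n _ (fun _ => measurable_gaussianPDF _ _) fun _ => hsf _]
  have hμ₁ : (Measure.pi fun _ : Fin n => gaussianReal θ₁ V) = volπ.withDensity p₁ := by
    have : (fun _ : Fin n => gaussianReal θ₁ V)
        = fun _ : Fin n => (volume : Measure ℝ).withDensity (gaussianPDF θ₁ V) := by
      funext _; exact gaussianReal_of_var_ne_zero _ hV
    rw [this, pi_withDensity_aux n _ (fun _ => measurable_gaussianPDF _ _) fun _ => hsf _]
  -- min and max densities
  set q : (Fin n → ℝ) → ℝ≥0∞ := fun v => min (p₀ v) (p₁ v) with hq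
  set r : (Fin n → ℝ) → ℝ≥0∞ := fun v => max (p₀ v) (p₁ v) with hr
  have hmq : Measurable q := hm₀.min hm₁
  have hmr : Measurable r := hm₀.max hm₁
  have htot₀ : ∫⁻ v, p₀ v ∂volπ = 1 := by
    rw [hp₀, lintegral_pi_prod_aux n _ fun _ => measurable_gaussianPDF _ _]
    simp [g₀, lintegral_gaussianPDF_eq_one _ hV]
  have htot₁ : ∫⁻ v, p₁ v ∂volπ = 1 := by
    rw [hp₁, lintegral_pi_prod_aux n _ fun _ => measurable_gaussianPDF _ _]
    simp [g₁, lintegral_gaussianPDF_eq_one _ hV]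
  set I : ℝ≥0∞ := ∫⁻ v, q v ∂volπ with hI
  set J : ℝ≥0∞ := ∫⁻ v, r v ∂volπ with hJ
  have hIJ : I + J = 2 := by
    rw [hI, hJ, ← lintegral_add_left hmq]
    have : ∀ v, q v + r v = p₀ v + p₁ v := fun v => min_add_max _ _
    simp_rw [this]
    rw [lintegral_add_left hm₀, htot₀, htot₁]
    norm_num
  have hIle : I ≤ 1 := by
    rw [hI, ← htot₀]
    exact lintegral_mono fun v => min_le_left _ _
  have hIfin : I ≠ ∞ := (lt_of_le_of_lt hIle (by norm_num)).ne
  have hJle : J ≤ 2 := hIJ ▸ le_add_self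
  have hJfin : J ≠ ∞ := (lt_of_le_of_lt hJle (by norm_num)).ne
  -- Hellinger affinity computation
  have hsqrtn : (0:ℝ) < Real.sqrt n := Real.sqrt_pos.mpr (by exact_mod_cast hn)
  have hδpos : 0 < δ := by rw [hδ]; positivity
  have hHell : ∫⁻ v, (p₀ v * p₁ v) ^ (1/2 : ℝ) ∂volπ
      = ENNReal.ofReal (Real.exp (-(1/8 : ℝ))) := by
    have hpoint : ∀ v : Fin n → ℝ, (p₀ v * p₁ v) ^ (1/2 : ℝ)
        = ∏ i, (g₀ (v i) * g₁ (v i)) ^ (1/2 : ℝ) := by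
      intro v
      rw [hp₀, hp₁, ← Finset.prod_mul_distrib]
      exact (ENNReal.prod_rpow_of_nonneg (by norm_num)).symm
    simp_rw [hpoint]
    rw [lintegral_pi_prod_aux n (fun _ x => (g₀ x * g₁ x) ^ (1/2 : ℝ))
      (fun _ => ((measurable_gaussianPDF _ _).mul (measurable_gaussianPDF _ _)).pow_const _)]
    have hcoord : ∫⁻ x, (g₀ x * g₁ x) ^ (1/2 : ℝ)
        = ENNReal.ofReal (Real.exp (-((θ₁ - θ₀) ^ 2 / (8 * (V : ℝ))))) := by
      have hpt : ∀ x : ℝ, (g₀ x * g₁ x) ^ (1/2 : ℝ)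
          = ENNReal.ofReal (Real.exp (-((θ₁ - θ₀) ^ 2 / (8 * (V : ℝ))))
              * gaussianPDFReal ((θ₀ + θ₁) / 2) V x) := by
        intro x
        rw [show g₀ x = ENNReal.ofReal (gaussianPDFReal θ₀ V x) from rfl,
          show g₁ x = ENNReal.ofReal (gaussianPDFReal θ₁ V x) from rfl,
          ← ENNReal.ofReal_mul (gaussianPDFReal_nonneg _ _ _),
          ENNReal.ofReal_rpow_of_nonneg
            (mul_nonneg (gaussianPDFReal_nonneg _ _ _) (gaussianPDFReal_nonneg _ _ _))
            (by norm_num), ← Real.sqrt_eq_rpow, gauss_sqrt_aux θ₀ θ₁ V hV x]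
      simp_rw [hpt]
      simp_rw [ENNReal.ofReal_mul (le_of_lt (Real.exp_pos _))]
      rw [lintegral_const_mul _ (measurable_gaussianPDFReal _ _).ennreal_ofReal]
      rw [lintegral_gaussianPDFReal_eq_one _ hV, mul_one]
    rw [hcoord, Finset.prod_const, Finset.card_univ, Fintype.card_fin,
      ← ENNReal.ofReal_pow (le_of_lt (Real.exp_pos _)), ← Real.exp_nat_mul]
    congr 2
    have hθdiff : θ₁ - θ₀ = 2 * δ := by simp [θ₀, θ₁]; ring
    have hδsq : δ ^ 2 = σ ^ 2 / (4 * n) := by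
      rw [hδ, div_pow, mul_pow, Real.sq_sqrt (Nat.cast_nonneg n)]
      ring
    rw [hθdiff, hVc]
    have hn' : (0:ℝ) < n := by exact_mod_cast hn
    field_simp
    rw [hδsq]
    field_simp
    ring
  -- Cauchy-Schwarz (Hölder with p = q = 2)
  have hconj : Real.HolderConjugate 2 2 := Real.holderConjugate_iff.mpr ⟨one_lt_two, by norm_num⟩
  have hCS : ∫⁻ v, (p₀ v * p₁ v) ^ (1/2 : ℝ) ∂volπ
      ≤ I ^ (1/2 : ℝ) * J ^ (1/2 : ℝ) := by
    have hfg : ∀ v, (p₀ v * p₁ v) ^ (1/2 : ℝ)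
        = ((fun v => q v ^ (1/2 : ℝ)) * fun v => r v ^ (1/2 : ℝ)) v := by
      intro v
      simp only [Pi.mul_apply]
      rw [← ENNReal.mul_rpow_of_nonneg _ _ (by norm_num : (0:ℝ) ≤ 1/2), hq, hr,
        min_mul_max]
    calc ∫⁻ v, (p₀ v * p₁ v) ^ (1/2 : ℝ) ∂volπ
        = ∫⁻ v, ((fun v => q v ^ (1/2 : ℝ)) * fun v => r v ^ (1/2 : ℝ)) v ∂volπ := by
          simp_rw [hfg]
      _ ≤ (∫⁻ v, (q v ^ (1/2 : ℝ)) ^ (2:ℝ) ∂volπ) ^ (1/(2:ℝ))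
            * (∫⁻ v, (r v ^ (1/2 : ℝ)) ^ (2:ℝ) ∂volπ) ^ (1/(2:ℝ)) :=
          ENNReal.lintegral_mul_le_Lp_mul_Lq volπ hconj
            (hmq.pow_const _).aemeasurable (hmr.pow_const _).aemeasurable
      _ = I ^ (1/2 : ℝ) * J ^ (1/2 : ℝ) := by
          have hsq : ∀ x : ℝ≥0∞, (x ^ (1/2 : ℝ)) ^ (2:ℝ) = x := by
            intro x
            rw [← ENNReal.rpow_mul]
            norm_num
          simp_rw [hsq]
          rfl
  have hH2 : ENNReal.ofReal (Real.exp (-(1/4 : ℝ))) ≤ I * J := by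
    have h1 : ENNReal.ofReal (Real.exp (-(1/8 : ℝ))) ≤ I ^ (1/2 : ℝ) * J ^ (1/2 : ℝ) :=
      hHell ▸ hCS
    have h2 := mul_le_mul' h1 h1
    calc ENNReal.ofReal (Real.exp (-(1/4 : ℝ)))
        = ENNReal.ofReal (Real.exp (-(1/8 : ℝ))) * ENNReal.ofReal (Real.exp (-(1/8 : ℝ))) := by
          rw [← ENNReal.ofReal_mul (le_of_lt (Real.exp_pos _)), ← Real.exp_add]
          norm_num
      _ ≤ (I ^ (1/2 : ℝ) * J ^ (1/2 : ℝ)) * (I ^ (1/2 : ℝ) * J ^ (1/2 : ℝ)) := h2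
      _ = (I ^ (1/2 : ℝ) * I ^ (1/2 : ℝ)) * (J ^ (1/2 : ℝ) * J ^ (1/2 : ℝ)) := by ring
      _ = I * J := by
          rw [← ENNReal.rpow_add_of_nonneg _ _ (by norm_num) (by norm_num),
            ← ENNReal.rpow_add_of_nonneg _ _ (by norm_num) (by norm_num)]
          norm_num
  -- convert to reals
  have hIJr : I.toReal + J.toReal = 2 := by
    rw [← ENNReal.toReal_add hIfin hJfin, hIJ]
    norm_num
  have hprod : Real.exp (-(1/4 : ℝ)) ≤ I.toReal * J.toReal := by
    rw [← ENNReal.toReal_mul]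
    rw [← ENNReal.ofReal_le_iff_le_toReal (ENNReal.mul_ne_top hIfin hJfin)] at *
    exact hH2
  have hexp : (3/4 : ℝ) ≤ Real.exp (-(1/4 : ℝ)) := by
    have := Real.add_one_le_exp (-(1/4 : ℝ))
    linarith
  have hIhalf : (1/2 : ℝ) ≤ I.toReal := by
    nlinarith [hprod, hIJr, hexp, ENNReal.toReal_nonneg (a := I), ENNReal.toReal_nonneg (a := J)]
  have hIge : ENNReal.ofReal (1/2 : ℝ) ≤ I := by
    calc ENNReal.ofReal (1/2 : ℝ) ≤ ENNReal.ofReal I.toReal := ENNReal.ofReal_le_ofReal hIhalf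
      _ = I := ENNReal.ofReal_toReal hIfin
  -- conclude
  rw [hμ₀, hμ₁, withDensity_apply _ hA, withDensity_apply _ hA.compl]
  calc ENNReal.ofReal (1/2 : ℝ) ≤ I := hIge
    _ = (∫⁻ v in A, q v ∂volπ) + ∫⁻ v in Aᶜ, q v ∂volπ := (lintegral_add_compl q hA).symm
    _ ≤ (∫⁻ v in A, p₀ v ∂volπ) + ∫⁻ v in Aᶜ, p₁ v ∂volπ :=
        add_le_add (lintegral_mono fun v => min_le_left _ _)
          (lintegral_mono fun v => min_le_right _ _)

end Key

/-- Minimax lower bound for Gaussian mean estimation in absolute-error loss: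
if `σ > 0`, `n ≥ 1` and `σ/(2√n) ≤ 1/4`, then for every measurable estimator
`μ̂ : ℝⁿ → ℝ`, the supremum over `θ ∈ [0,1]` of the risk
`E_{X ~ N(θ,σ²)^⊗n} |μ̂(X) − θ|` is at least `σ/(8√n)`. -/
theorem gaussian_mean_estimation_minimax_lower (σ : ℝ) (hσ : 0 < σ) (n : ℕ) (hn : 1 ≤ n)
    (hsmall : σ / (2 * Real.sqrt n) ≤ 1 / 4)
    (est : (Fin n → ℝ) → ℝ) (hest : Measurable est) :
    ENNReal.ofReal (σ / (8 * Real.sqrt n)) ≤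
      ⨆ θ : Set.Icc (0 : ℝ) 1,
        ∫⁻ v, ENNReal.ofReal |est v - (θ : ℝ)|
          ∂(Measure.pi fun _ : Fin n => gaussianReal (θ : ℝ) (Real.toNNReal (σ ^ 2))) := by
  set δ : ℝ := σ / (2 * Real.sqrt n) with hδ
  have hsqrtn : (0:ℝ) < Real.sqrt n := Real.sqrt_pos.mpr (by exact_mod_cast hn)
  have hδpos : 0 < δ := by rw [hδ]; positivity
  set θ₀ : ℝ := 1 / 2 - δ with hθ₀
  set θ₁ : ℝ := 1 / 2 + δ with hθ₁
  have hmem₀ : θ₀ ∈ Set.Icc (0:ℝ) 1 := ⟨by rw [hθ₀]; linarith, by rw [hθ₀]; linarith⟩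
  have hmem₁ : θ₁ ∈ Set.Icc (0:ℝ) 1 := ⟨by rw [hθ₁]; linarith, by rw [hθ₁]; linarith⟩
  set μ₀ : Measure (Fin n → ℝ) :=
    Measure.pi fun _ : Fin n => gaussianReal θ₀ (Real.toNNReal (σ ^ 2)) with hμ₀
  set μ₁ : Measure (Fin n → ℝ) :=
    Measure.pi fun _ : Fin n => gaussianReal θ₁ (Real.toNNReal (σ ^ 2)) with hμ₁
  set A : Set (Fin n → ℝ) := est ⁻¹' Set.Ici (1/2 : ℝ) with hAdef
  have hA : MeasurableSet A := hest measurableSet_Ici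
  set S := ⨆ θ : Set.Icc (0 : ℝ) 1,
      ∫⁻ v, ENNReal.ofReal |est v - (θ : ℝ)|
        ∂(Measure.pi fun _ : Fin n => gaussianReal (θ : ℝ) (Real.toNNReal (σ ^ 2))) with hS
  have habs : Measurable fun v => ENNReal.ofReal |est v - θ₀| :=
    ((hest.sub measurable_const).abs).ennreal_ofReal
  have habs' : Measurable fun v => ENNReal.ofReal |est v - θ₁| :=
    ((hest.sub measurable_const).abs).ennreal_ofReal
  have hR₀ : ENNReal.ofReal δ * μ₀ A ≤ ∫⁻ v, ENNReal.ofReal |est v - θ₀| ∂μ₀ := by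
    calc ENNReal.ofReal δ * μ₀ A = ∫⁻ _ in A, ENNReal.ofReal δ ∂μ₀ :=
          (setLIntegral_const A _).symm
      _ ≤ ∫⁻ v in A, ENNReal.ofReal |est v - θ₀| ∂μ₀ := by
          refine setLIntegral_mono habs fun v hv => ?_
          refine ENNReal.ofReal_le_ofReal ?_
          have h1 : (1/2 : ℝ) ≤ est v := hv
          have : δ ≤ est v - θ₀ := by rw [hθ₀]; linarith
          exact this.trans (le_abs_self _)
      _ ≤ ∫⁻ v, ENNReal.ofReal |est v - θ₀| ∂μ₀ := setLIntegral_le_lintegral _ _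
  have hR₁ : ENNReal.ofReal δ * μ₁ Aᶜ ≤ ∫⁻ v, ENNReal.ofReal |est v - θ₁| ∂μ₁ := by
    calc ENNReal.ofReal δ * μ₁ Aᶜ = ∫⁻ _ in Aᶜ, ENNReal.ofReal δ ∂μ₁ :=
          (setLIntegral_const Aᶜ _).symm
      _ ≤ ∫⁻ v in Aᶜ, ENNReal.ofReal |est v - θ₁| ∂μ₁ := by
          refine setLIntegral_mono habs' fun v hv => ?_
          refine ENNReal.ofReal_le_ofReal ?_
          have h1 : est v < (1/2 : ℝ) := by
            simpa [hAdef, Set.mem_preimage, Set.mem_Ici, not_le] using hv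
          have : δ ≤ θ₁ - est v := by rw [hθ₁]; linarith
          exact this.trans ((neg_sub (est v) θ₁) ▸ (neg_le_abs _))
      _ ≤ ∫⁻ v, ENNReal.ofReal |est v - θ₁| ∂μ₁ := setLIntegral_le_lintegral _ _
  have hkey : ENNReal.ofReal (1/2) ≤ μ₀ A + μ₁ Aᶜ :=
    two_point_aux σ hσ n hn δ hδ A hA
  have hsup₀ : (∫⁻ v, ENNReal.ofReal |est v - θ₀| ∂μ₀) ≤ S := by
    rw [hS]
    exact le_iSup (fun θ : Set.Icc (0:ℝ) 1 =>
      ∫⁻ v, ENNReal.ofReal |est v - (θ : ℝ)|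
        ∂(Measure.pi fun _ : Fin n => gaussianReal (θ : ℝ) (Real.toNNReal (σ ^ 2))))
      ⟨θ₀, hmem₀⟩
  have hsup₁ : (∫⁻ v, ENNReal.ofReal |est v - θ₁| ∂μ₁) ≤ S := by
    rw [hS]
    exact le_iSup (fun θ : Set.Icc (0:ℝ) 1 =>
      ∫⁻ v, ENNReal.ofReal |est v - (θ : ℝ)|
        ∂(Measure.pi fun _ : Fin n => gaussianReal (θ : ℝ) (Real.toNNReal (σ ^ 2))))
      ⟨θ₁, hmem₁⟩
  have hchain : ENNReal.ofReal (δ/2) ≤ 2 * S := by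
    calc ENNReal.ofReal (δ/2) = ENNReal.ofReal δ * ENNReal.ofReal (1/2) := by
          rw [← ENNReal.ofReal_mul hδpos.le]; congr 1; ring
      _ ≤ ENNReal.ofReal δ * (μ₀ A + μ₁ Aᶜ) := mul_le_mul' le_rfl hkey
      _ = ENNReal.ofReal δ * μ₀ A + ENNReal.ofReal δ * μ₁ Aᶜ := mul_add _ _ _
      _ ≤ (∫⁻ v, ENNReal.ofReal |est v - θ₀| ∂μ₀) + ∫⁻ v, ENNReal.ofReal |est v - θ₁| ∂μ₁ :=
          add_le_add hR₀ hR₁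
      _ ≤ S + S := add_le_add hsup₀ hsup₁
      _ = 2 * S := (two_mul S).symm
  have hgoal : ENNReal.ofReal (σ / (8 * Real.sqrt n)) = ENNReal.ofReal (δ/4) := by
    congr 1
    rw [hδ, div_div]
    ring_nf
  rw [hgoal]
  have h24 : ENNReal.ofReal (δ/2) = 2 * ENNReal.ofReal (δ/4) := by
    rw [← ENNReal.ofReal_ofNat, ← ENNReal.ofReal_mul (by norm_num)]
    congr 1; ring
  rw [h24] at hchain
  exact (ENNReal.mul_le_mul_iff_right (by norm_num) (by norm_num)).mp hchain
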